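/- arXiv:2010.05505 — 3 statements merged into one kernel-verified Lean document; each statement's English description precedes it below -/
import Mathlib

section
/- For all integers m ≥ 0 and n ≥ 1 and every real z with 0 ≤ z < 1, one has ∑_{a > m} (1/a)·C(a,n;z) = m! (n−1)!/(m+n)! · F(m+1, n; m+n+1; z), where the sum is over integers a > m. -/
/-- The rising factorial (Pochhammer symbol) (a)_n = a(a+1)⋯(a+n−1). -/
noncomputable def risingFactorial (a : ℝ) (n : ℕ) : ℝ := ∏ i ∈ Finset.range n, (a + i)

/-- The Gauss hypergeometric series F(α,β;γ;z) = ∑_{n≥0} (α)_n (β)_n / ((γ)_n n!) · zⁿ. -/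
noncomputable def F (α β γ z : ℝ) : ℝ :=
  ∑' n : ℕ, risingFactorial α n * risingFactorial β n /
    (risingFactorial γ n * (n.factorial : ℝ)) * z ^ n

/-- The connector C(m,n;z) = m! n!/(m+n)! · F(m, n; m+n+1; z). -/
noncomputable def C (m n : ℕ) (z : ℝ) : ℝ :=
  (m.factorial : ℝ) * n.factorial / (m + n).factorial * F m n (m + n + 1) z

lemma fact_mul_rf (c k : ℕ) :
    (c.factorial : ℝ) * risingFactorial ((c : ℝ) + 1) k = ((c + k).factorial : ℝ) := by
  induction k with
  | zero => simp [risingFactorial]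
  | succ k ih =>
    have h : risingFactorial ((c : ℝ) + 1) (k + 1)
        = risingFactorial ((c : ℝ) + 1) k * ((c : ℝ) + 1 + k) := Finset.prod_range_succ _ _
    rw [h, ← mul_assoc, ih, show c + (k + 1) = (c + k) + 1 from rfl, Nat.factorial_succ]
    push_cast
    ring

lemma rf_eq (c k : ℕ) :
    risingFactorial ((c : ℝ) + 1) k = ((c + k).factorial : ℝ) / (c.factorial : ℝ) := by
  rw [eq_div_iff (by exact_mod_cast c.factorial_ne_zero), mul_comm]
  exact fact_mul_rf c k

lemma fact_ineq (a k b : ℕ) :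
    (a + k).factorial * (b + k).factorial ≤ (a + b + k).factorial * k.factorial := by
  induction b with
  | zero => simp
  | succ b ih =>
    calc (a + k).factorial * ((b + 1) + k).factorial
        = ((a + k).factorial * (b + k).factorial) * (b + k + 1) := by
          rw [show (b + 1) + k = (b + k) + 1 by omega, Nat.factorial_succ]; ring
      _ ≤ ((a + b + k).factorial * k.factorial) * (b + k + 1) :=
          Nat.mul_le_mul_right _ ih
      _ ≤ ((a + b + k).factorial * k.factorial) * (a + b + k + 1) :=
          Nat.mul_le_mul_left _ (by omega)
      _ = (a + (b + 1) + k).factorial * k.factorial := by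
          rw [show a + (b + 1) + k = (a + b + k) + 1 by omega, Nat.factorial_succ]; ring

lemma F_nat (A B G : ℕ) (z : ℝ) :
    F ((A : ℝ) + 1) ((B : ℝ) + 1) ((G : ℝ) + 1) z
      = ∑' k : ℕ, ((A + k).factorial : ℝ) * ((B + k).factorial : ℝ) * (G.factorial : ℝ) /
          ((A.factorial : ℝ) * (B.factorial : ℝ) * ((G + k).factorial : ℝ) * (k.factorial : ℝ))
          * z ^ k := by
  unfold F
  refine tsum_congr fun k => ?_
  rw [rf_eq A k, rf_eq B k, rf_eq G k]
  have hA : (A.factorial : ℝ) ≠ 0 := by exact_mod_cast A.factorial_ne_zero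
  have hB : (B.factorial : ℝ) ≠ 0 := by exact_mod_cast B.factorial_ne_zero
  have hG : (G.factorial : ℝ) ≠ 0 := by exact_mod_cast G.factorial_ne_zero
  have hGk : ((G + k).factorial : ℝ) ≠ 0 := by exact_mod_cast (G + k).factorial_ne_zero
  have hk : (k.factorial : ℝ) ≠ 0 := by exact_mod_cast k.factorial_ne_zero
  field_simp

/-- The key double-sum term. -/
noncomputable def Tm (p : ℕ) (z : ℝ) (c k : ℕ) : ℝ :=
  ((p : ℝ) + 1) * ((c + k).factorial : ℝ) * ((p + k).factorial : ℝ) /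
    (((c + k + p + 2).factorial : ℝ) * (k.factorial : ℝ)) * z ^ k

lemma row_eq (p c : ℕ) (z : ℝ) :
    1 / (((c + 1 : ℕ) : ℝ)) * C (c + 1) (p + 1) z = ∑' k : ℕ, Tm p z c k := by
  unfold C
  have a1 : ((c + 1 : ℕ) : ℝ) = (c : ℝ) + 1 := by push_cast; ring
  have a2 : ((p + 1 : ℕ) : ℝ) = (p : ℝ) + 1 := by push_cast; ring
  have a3 : ((c : ℝ) + 1) + ((p : ℝ) + 1) + 1 = ((c + p + 2 : ℕ) : ℝ) + 1 := by push_cast; ring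
  rw [a1, a2, a3, F_nat c p (c + p + 2) z, ← tsum_mul_left, ← tsum_mul_left]
  refine tsum_congr fun k => ?_
  unfold Tm
  rw [show (c + 1) + (p + 1) = c + p + 2 by omega, show c + p + 2 + k = c + k + p + 2 by omega,
    Nat.factorial_succ c, Nat.factorial_succ p]
  have hc : (c.factorial : ℝ) ≠ 0 := by exact_mod_cast c.factorial_ne_zero
  have hp : (p.factorial : ℝ) ≠ 0 := by exact_mod_cast p.factorial_ne_zero
  have hG : ((c + p + 2).factorial : ℝ) ≠ 0 := by exact_mod_cast (c + p + 2).factorial_ne_zero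
  have hGk : ((c + k + p + 2).factorial : ℝ) ≠ 0 := by
    exact_mod_cast (c + k + p + 2).factorial_ne_zero
  have hk : (k.factorial : ℝ) ≠ 0 := by exact_mod_cast k.factorial_ne_zero
  have hc1 : ((c : ℝ) + 1) ≠ 0 := by positivity
  push_cast
  field_simp

lemma rhs_eq (p m : ℕ) (z : ℝ) :
    (m.factorial : ℝ) * (p.factorial : ℝ) / ((m + (p + 1)).factorial : ℝ) *
      F ((m : ℝ) + 1) ((p + 1 : ℕ) : ℝ) ((m : ℝ) + ((p + 1 : ℕ) : ℝ) + 1) z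
      = ∑' k : ℕ, ((m + k).factorial : ℝ) * ((p + k).factorial : ℝ) /
          (((m + k + p + 1).factorial : ℝ) * (k.factorial : ℝ)) * z ^ k := by
  have a2 : ((p + 1 : ℕ) : ℝ) = (p : ℝ) + 1 := by push_cast; ring
  have a3 : (m : ℝ) + ((p : ℝ) + 1) + 1 = ((m + p + 1 : ℕ) : ℝ) + 1 := by push_cast; ring
  rw [a2, a3, F_nat m p (m + p + 1) z, ← tsum_mul_left]
  refine tsum_congr fun k => ?_
  rw [show m + (p + 1) = m + p + 1 by omega, show m + p + 1 + k = m + k + p + 1 by omega]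
  have hm : (m.factorial : ℝ) ≠ 0 := by exact_mod_cast m.factorial_ne_zero
  have hp : (p.factorial : ℝ) ≠ 0 := by exact_mod_cast p.factorial_ne_zero
  have hG : ((m + p + 1).factorial : ℝ) ≠ 0 := by exact_mod_cast (m + p + 1).factorial_ne_zero
  have hGk : ((m + k + p + 1).factorial : ℝ) ≠ 0 := by
    exact_mod_cast (m + k + p + 1).factorial_ne_zero
  have hk : (k.factorial : ℝ) ≠ 0 := by exact_mod_cast k.factorial_ne_zero
  field_simp

lemma f_diff (p j : ℕ) :
    (j.factorial : ℝ) / ((j + p + 1).factorial : ℝ)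
      - ((j + 1).factorial : ℝ) / ((j + 1 + p + 1).factorial : ℝ)
      = ((p : ℝ) + 1) * (j.factorial : ℝ) / ((j + p + 2).factorial : ℝ) := by
  rw [show j + 1 + p + 1 = (j + p + 1) + 1 by omega, show j + p + 2 = (j + p + 1) + 1 by omega,
    Nat.factorial_succ (j + p + 1), Nat.factorial_succ j]
  have h1 : ((j + p + 1).factorial : ℝ) ≠ 0 := by exact_mod_cast (j + p + 1).factorial_ne_zero
  have h2 : ((j + p + 1 : ℕ) : ℝ) + 1 ≠ 0 := by positivity
  push_cast
  field_simp
  ring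

lemma telescope (p M : ℕ) :
    HasSum (fun b : ℕ => ((p : ℝ) + 1) * ((M + b).factorial : ℝ) / ((M + b + p + 2).factorial : ℝ))
      ((M.factorial : ℝ) / ((M + p + 1).factorial : ℝ)) := by
  set f : ℕ → ℝ := fun j => (j.factorial : ℝ) / ((j + p + 1).factorial : ℝ) with hf
  rw [hasSum_iff_tendsto_nat_of_nonneg (fun b => by positivity)]
  have hsum : ∀ N : ℕ, ∑ b ∈ Finset.range N,
      ((p : ℝ) + 1) * ((M + b).factorial : ℝ) / ((M + b + p + 2).factorial : ℝ)
      = f M - f (M + N) := by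
    intro N
    have : ∀ b, ((p : ℝ) + 1) * ((M + b).factorial : ℝ) / ((M + b + p + 2).factorial : ℝ)
        = f (M + b) - f (M + b + 1) := by
      intro b
      rw [hf]
      simpa using (f_diff p (M + b)).symm
    rw [Finset.sum_congr rfl fun b _ => this b]
    simpa [add_assoc] using Finset.sum_range_sub' (fun b => f (M + b)) N
  simp only [hsum]
  have htend : Filter.Tendsto (fun N : ℕ => f (M + N)) Filter.atTop (nhds 0) := by
    apply squeeze_zero (fun N => by positivity) (g := fun N : ℕ => 1 / ((N : ℝ) + 1))
    · intro N
      rw [hf, div_le_div_iff₀ (by positivity) (by positivity)]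
      have : (M + N + 1) * (M + N).factorial ≤ (M + N + p + 1).factorial := by
        calc (M + N + 1) * (M + N).factorial = (M + N + 1).factorial := by
              rw [Nat.factorial_succ]
          _ ≤ (M + N + p + 1).factorial := Nat.factorial_le (by omega)
      calc ((M + N).factorial : ℝ) * ((N : ℝ) + 1)
          ≤ ((M + N).factorial : ℝ) * ((M + N : ℕ) + 1) := by
            apply mul_le_mul_of_nonneg_left _ (by positivity)
            push_cast; linarith [Nat.cast_nonneg (α := ℝ) M]
        _ ≤ 1 * ((M + N + p + 1).factorial : ℝ) := by
            rw [one_mul]; exact_mod_cast (by rw [mul_comm] at this; exact this)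
    · exact tendsto_one_div_add_atTop_nhds_zero_nat
  have := Filter.Tendsto.sub (tendsto_const_nhds (x := f M)) htend
  simpa using this

lemma Tm_nonneg (p : ℕ) (z : ℝ) (hz : 0 ≤ z) (c k : ℕ) : 0 ≤ Tm p z c k := by
  unfold Tm; positivity

lemma Tm_le (p : ℕ) (z : ℝ) (hz : 0 ≤ z) (c k : ℕ) : Tm p z c k ≤ ((p : ℝ) + 1) * z ^ k := by
  have hN : ((c + k).factorial * (p + k).factorial : ℕ)
      ≤ (c + k + p + 2).factorial * k.factorial := by
    calc (c + k).factorial * (p + k).factorial ≤ (c + p + k).factorial * k.factorial :=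
          fact_ineq c k p
      _ ≤ (c + k + p + 2).factorial * k.factorial :=
          Nat.mul_le_mul_right _ (Nat.factorial_le (by omega))
  have h1 : (((c + k).factorial : ℝ) * ((p + k).factorial : ℝ)) /
      (((c + k + p + 2).factorial : ℝ) * (k.factorial : ℝ)) ≤ 1 := by
    apply div_le_one_of_le₀
    · exact_mod_cast hN
    · positivity
  calc Tm p z c k = (((p : ℝ) + 1) * z ^ k) *
        ((((c + k).factorial : ℝ) * ((p + k).factorial : ℝ)) /
          (((c + k + p + 2).factorial : ℝ) * (k.factorial : ℝ))) := by unfold Tm; ring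
    _ ≤ (((p : ℝ) + 1) * z ^ k) * 1 := by
        apply mul_le_mul_of_nonneg_left h1 (by positivity)
    _ = ((p : ℝ) + 1) * z ^ k := mul_one _

lemma col_hasSum (p m k : ℕ) (z : ℝ) :
    HasSum (fun b : ℕ => Tm p z (m + b) k)
      (((m + k).factorial : ℝ) * ((p + k).factorial : ℝ) /
        (((m + k + p + 1).factorial : ℝ) * (k.factorial : ℝ)) * z ^ k) := by
  have h := (telescope p (m + k)).mul_right (((p + k).factorial : ℝ) / (k.factorial : ℝ) * z ^ k)
  convert h using 1
  · rfl
  · funext b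
    unfold Tm
    rw [show m + b + k = m + k + b by omega]
    ring
  · ring

lemma R_le (p m : ℕ) (z : ℝ) (hz : 0 ≤ z) (k : ℕ) :
    ((m + k).factorial : ℝ) * ((p + k).factorial : ℝ) /
        (((m + k + p + 1).factorial : ℝ) * (k.factorial : ℝ)) * z ^ k ≤ z ^ k := by
  have hN : ((m + k).factorial * (p + k).factorial : ℕ)
      ≤ (m + k + p + 1).factorial * k.factorial := by
    calc (m + k).factorial * (p + k).factorial ≤ (m + p + k).factorial * k.factorial :=
          fact_ineq m k p
      _ ≤ (m + k + p + 1).factorial * k.factorial :=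
          Nat.mul_le_mul_right _ (Nat.factorial_le (by omega))
  have h1 : (((m + k).factorial : ℝ) * ((p + k).factorial : ℝ)) /
      (((m + k + p + 1).factorial : ℝ) * (k.factorial : ℝ)) ≤ 1 := by
    apply div_le_one_of_le₀
    · exact_mod_cast hN
    · positivity
  calc ((m + k).factorial : ℝ) * ((p + k).factorial : ℝ) /
        (((m + k + p + 1).factorial : ℝ) * (k.factorial : ℝ)) * z ^ k
      = ((((m + k).factorial : ℝ) * ((p + k).factorial : ℝ)) /
          (((m + k + p + 1).factorial : ℝ) * (k.factorial : ℝ))) * z ^ k := by ring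
    _ ≤ 1 * z ^ k := mul_le_mul_of_nonneg_right h1 (by positivity)
    _ = z ^ k := one_mul _

/-- ∑_{a>m} (1/a)·C(a,n;z) = m!(n−1)!/(m+n)! · F(m+1,n;m+n+1;z) for n ≥ 1. -/
theorem connector_sum_eval' (m n : ℕ) (hn : 1 ≤ n) (z : ℝ) (hz0 : 0 ≤ z) (hz1 : z < 1) :
    ∑' a : {a : ℕ // m < a}, 1 / (a : ℝ) * C a n z
      = (m.factorial : ℝ) * (n - 1).factorial / (m + n).factorial *
        F (m + 1) n (m + n + 1) z := by
  obtain ⟨p, rfl⟩ : ∃ p, n = p + 1 := ⟨n - 1, by omega⟩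
  have hzabs : Summable fun k : ℕ => z ^ k := summable_geometric_of_lt_one hz0 hz1
  have hcol : ∀ k : ℕ, Summable fun b : ℕ => Tm p z (m + b) k :=
    fun k => (col_hasSum p m k z).summable
  have hrow : ∀ b : ℕ, Summable fun k : ℕ => Tm p z (m + b) k := fun b =>
    Summable.of_nonneg_of_le (fun k => Tm_nonneg p z hz0 (m + b) k)
      (fun k => Tm_le p z hz0 (m + b) k) (hzabs.mul_left ((p : ℝ) + 1))
  have hR : Summable fun k : ℕ =>
      ((m + k).factorial : ℝ) * ((p + k).factorial : ℝ) /
        (((m + k + p + 1).factorial : ℝ) * (k.factorial : ℝ)) * z ^ k :=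
    Summable.of_nonneg_of_le (fun k => by positivity) (fun k => R_le p m z hz0 k) hzabs
  have huncurry : Summable (Function.uncurry fun (k b : ℕ) => Tm p z (m + b) k) := by
    refine (summable_prod_of_nonneg ?_).mpr ⟨fun k => hcol k, ?_⟩
    · intro q
      exact Tm_nonneg p z hz0 _ _
    · exact hR.congr fun k => ((col_hasSum p m k z).tsum_eq).symm
  let e : ℕ ≃ {a : ℕ // m < a} :=
    { toFun := fun b => ⟨m + 1 + b, by omega⟩
      invFun := fun a => a.1 - (m + 1)
      left_inv := fun b => by show m + 1 + b - (m + 1) = b; omega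
      right_inv := fun a => Subtype.ext (by have := a.2; show m + 1 + (a.1 - (m + 1)) = a.1; omega) }
  calc ∑' a : {a : ℕ // m < a}, 1 / (a : ℝ) * C a (p + 1) z
      = ∑' b : ℕ, 1 / (((e b : {a : ℕ // m < a}) : ℕ) : ℝ) * C ((e b : {a : ℕ // m < a}) : ℕ) (p + 1) z :=
        (Equiv.tsum_eq e fun a : {a : ℕ // m < a} => 1 / (a : ℝ) * C a (p + 1) z).symm
    _ = ∑' b : ℕ, ∑' k : ℕ, Tm p z (m + b) k := by
        refine tsum_congr fun b => ?_
        have hb : ((e b : {a : ℕ // m < a}) : ℕ) = (m + b) + 1 := by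
          show m + 1 + b = (m + b) + 1; omega
        rw [hb]
        exact row_eq p (m + b) z
    _ = ∑' k : ℕ, ∑' b : ℕ, Tm p z (m + b) k :=
        Summable.tsum_comm' huncurry (fun k => hcol k) (fun b => hrow b)
    _ = ∑' k : ℕ, ((m + k).factorial : ℝ) * ((p + k).factorial : ℝ) /
          (((m + k + p + 1).factorial : ℝ) * (k.factorial : ℝ)) * z ^ k :=
        tsum_congr fun k => (col_hasSum p m k z).tsum_eq
    _ = (m.factorial : ℝ) * ((p + 1 - 1).factorial : ℝ) / ((m + (p + 1)).factorial : ℝ) *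
          F ((m : ℝ) + 1) ((p + 1 : ℕ) : ℝ) ((m : ℝ) + ((p + 1 : ℕ) : ℝ) + 1) z := by
        rw [show p + 1 - 1 = p by omega]
        exact (rhs_eq p m z).symm
end

section
/- Let z be real with 0 ≤ z < 1 and let k̃ = ((k_1,μ_1),…,(k_r,μ_r)) and l̃ = ((l_1,ν_1),…,(l_s,ν_s)) be augmented indices. Then the connected sum satisfies the transport relation L̃i(w(k̃)y_0; w(l̃); z) = L̃i(w(k̃); w(l̃)y_0; z), i.e. appending the letter y_0 (that is, appending the augmented entry (1,0)) to the first index gives the same value as appending it to the second index. -/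
open scoped ENNReal

/-- An augmented index: a tuple of pairs (k_i, μ_i) with μ_i ∈ {0,1};
`true` encodes μ = 1 and `false` encodes μ = 0. -/
abbrev AugIndex := List (ℕ × Bool)

/-- All exponents k_i of the augmented index are positive integers. -/
def AugIndex.Valid (K : AugIndex) : Prop := ∀ p ∈ K, 1 ≤ p.1

/-- An augmented index is admissible if it is empty or its last entry is not (1,1). -/
def AugIndex.Admissible (K : AugIndex) : Prop := K.getLast? ≠ some (1, true)

/-- The strictly increasing chain 0 = m_0 < m_1 < ⋯ < m_r encoded by gaps `d`:
m_i = (d_0 + 1) + ⋯ + (d_{i-1} + 1). -/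
def chain {r : ℕ} (d : Fin r → ℕ) (i : ℕ) : ℕ :=
  ∑ j ∈ Finset.univ.filter (fun j : Fin r => (j : ℕ) < i), (d j + 1)

/-- The factor (μ_i + (−1)^{μ_i} z^{m_i − m_{i−1}}) / m_i^{k_i}. -/
noncomputable def termFactor (z : ℝ) (k : ℕ) (μ : Bool) (mprev mcur : ℕ) : ℝ :=
  ((if μ then 1 else 0) + (if μ then -1 else 1) * z ^ (mcur - mprev)) / (mcur : ℝ) ^ k

/-- The connected sum L̃i(k̃; l̃; z), a well-defined sum of nonnegative terms in [0,∞]. -/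
noncomputable def connSum (K L : AugIndex) (z : ℝ) : ℝ≥0∞ :=
  ∑' p : (Fin K.length → ℕ) × (Fin L.length → ℕ),
    ENNReal.ofReal
      ((∏ i : Fin K.length,
          termFactor z (K.get i).1 (K.get i).2 (chain p.1 i.val) (chain p.1 (i.val + 1))) *
       (∏ j : Fin L.length,
          termFactor z (L.get j).1 (L.get j).2 (chain p.2 j.val) (chain p.2 (j.val + 1))) *
       C (chain p.1 K.length) (chain p.2 L.length) z)

/-- Appending the letter x to the word w(k̃): increase the last exponent k_r by 1. -/
def incLast : AugIndex → AugIndex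
  | [] => []
  | [p] => [(p.1 + 1, p.2)]
  | p :: q :: ps => p :: incLast (q :: ps)

-- ### Auxiliary lemmas

lemma rf_zero (a : ℝ) : risingFactorial a 0 = 1 := by simp [risingFactorial]

lemma rf_succ (a : ℝ) (n : ℕ) :
    risingFactorial a (n + 1) = risingFactorial a n * (a + n) := by
  simp [risingFactorial, Finset.prod_range_succ]

lemma rf_succ' (a : ℝ) (n : ℕ) :
    risingFactorial a (n + 1) = a * risingFactorial (a + 1) n := by
  rw [risingFactorial, Finset.prod_range_succ']
  simp only [Nat.cast_zero, add_zero, Nat.cast_add, Nat.cast_one]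
  rw [mul_comm]
  congr 1
  exact Finset.prod_congr rfl (fun i _ => by ring)

lemma rf_nonneg {a : ℝ} (h : 0 ≤ a) (n : ℕ) : 0 ≤ risingFactorial a n :=
  Finset.prod_nonneg fun i _ => by positivity

lemma rf_pos {a : ℝ} (h : 0 < a) (n : ℕ) : 0 < risingFactorial a n :=
  Finset.prod_pos fun i _ => by positivity

lemma rf_mono {a b : ℝ} (h0 : 0 ≤ a) (h : a ≤ b) (n : ℕ) :
    risingFactorial a n ≤ risingFactorial b n :=
  Finset.prod_le_prod (fun i _ => by positivity) (fun i _ => by linarith)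

lemma fact_mul_rf_s6 (m j : ℕ) :
    (m.factorial : ℝ) * risingFactorial ((m : ℝ) + 1) j = ((m + j).factorial : ℝ) := by
  induction j with
  | zero => simp [rf_zero]
  | succ j ih =>
      rw [rf_succ, ← mul_assoc, ih]
      have : ((m + (j+1)).factorial : ℝ) = ((m + j).factorial : ℝ) * ((m : ℝ) + j + 1) := by
        have h : m + (j + 1) = (m + j) + 1 := by ring
        rw [h, Nat.factorial_succ]
        push_cast; ring
      rw [this]; ring

lemma rf_le_pow (N j : ℕ) :
    risingFactorial (N : ℝ) j ≤ ((j : ℝ) + 1) ^ N * (j.factorial : ℝ) := by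
  induction j with
  | zero => simp [rf_zero]
  | succ j ih =>
      rw [rf_succ]
      have h1 : (0:ℝ) ≤ (N : ℝ) + j := by positivity
      have hj1 : (0:ℝ) < (j : ℝ) + 1 := by positivity
      have hP : (0:ℝ) ≤ ((j:ℝ)+1)^N := by positivity
      have key : ((j : ℝ) + 1) ^ N * ((N : ℝ) + j) ≤ ((j : ℝ) + 2) ^ N * ((j : ℝ) + 1) := by
        have hx : (-2 : ℝ) ≤ 1 / ((j : ℝ) + 1) := by
          have : (0:ℝ) ≤ 1/((j:ℝ)+1) := by positivity
          linarith
        have hb := one_add_mul_le_pow hx N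
        have hsplit : ((j : ℝ) + 2) = ((j : ℝ) + 1) * (1 + 1 / ((j : ℝ) + 1)) := by
          field_simp
          ring
        have h4 : ((j:ℝ)+1)^N * ((N:ℝ)+j) ≤
            ((j:ℝ)+1)^N * ((1 + (N:ℝ)*(1/((j:ℝ)+1))) * ((j:ℝ)+1)) := by
          apply mul_le_mul_of_nonneg_left _ hP
          have he : (1 + (N:ℝ)*(1/((j:ℝ)+1))) * ((j:ℝ)+1) = (j:ℝ)+1+(N:ℝ) := by
            field_simp
          rw [he]; linarith
        have h5 : ((j:ℝ)+1)^N * ((1 + (N:ℝ)*(1/((j:ℝ)+1))) * ((j:ℝ)+1)) ≤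
            ((j:ℝ)+1)^N * ((1 + 1/((j:ℝ)+1))^N * ((j:ℝ)+1)) := by
          apply mul_le_mul_of_nonneg_left _ hP
          exact mul_le_mul_of_nonneg_right hb (le_of_lt hj1)
        calc ((j : ℝ) + 1) ^ N * ((N : ℝ) + j)
            ≤ ((j:ℝ)+1)^N * ((1 + 1/((j:ℝ)+1))^N * ((j:ℝ)+1)) := le_trans h4 h5
          _ = (((j:ℝ)+1) * (1 + 1/((j:ℝ)+1)))^N * ((j:ℝ)+1) := by rw [mul_pow]; ring
          _ = ((j : ℝ) + 2) ^ N * ((j : ℝ) + 1) := by rw [← hsplit]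
      have hfact : (0:ℝ) ≤ (j.factorial : ℝ) := by positivity
      calc risingFactorial (N : ℝ) j * ((N : ℝ) + j)
          ≤ (((j : ℝ) + 1) ^ N * (j.factorial : ℝ)) * ((N : ℝ) + j) :=
            mul_le_mul_of_nonneg_right ih h1
        _ = (((j : ℝ) + 1) ^ N * ((N : ℝ) + j)) * (j.factorial : ℝ) := by ring
        _ ≤ (((j : ℝ) + 2) ^ N * ((j : ℝ) + 1)) * (j.factorial : ℝ) :=
            mul_le_mul_of_nonneg_right key hfact
        _ = (((j+1 : ℕ) : ℝ) + 1) ^ N * ((j+1).factorial : ℝ) := by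
            rw [Nat.factorial_succ]; push_cast; ring

lemma summable_poly_geom {z : ℝ} (hz0 : 0 ≤ z) (hz1 : z < 1) (N : ℕ) :
    Summable (fun j : ℕ => ((j : ℝ) + 1) ^ N * z ^ j) := by
  rcases eq_or_lt_of_le hz0 with h0 | h0
  · apply summable_of_ne_finset_zero (s := {0})
    intro j hj
    have : j ≠ 0 := by simpa using hj
    rw [← h0, zero_pow this, mul_zero]
  · have hnorm : ‖z‖ < 1 := by rw [Real.norm_eq_abs, abs_of_nonneg hz0]; exact hz1
    have S1 : Summable (fun j : ℕ => (j : ℝ) ^ N * z ^ j) :=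
      summable_pow_mul_geometric_of_norm_lt_one N hnorm
    have S2 : Summable (fun j : ℕ => ((j + 1 : ℕ) : ℝ) ^ N * z ^ (j + 1)) :=
      (summable_nat_add_iff 1).2 S1
    have S3 : Summable (fun j : ℕ => z⁻¹ * (((j + 1 : ℕ) : ℝ) ^ N * z ^ (j + 1))) :=
      S2.mul_left _
    apply S3.congr
    intro j
    have hz : z ≠ 0 := ne_of_gt h0
    push_cast
    rw [pow_succ]
    field_simp

/-- The `j`-th term of the hypergeometric series appearing in `C a b z`. -/
noncomputable def hterm (a b : ℕ) (z : ℝ) (j : ℕ) : ℝ :=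
  risingFactorial (a : ℝ) j * risingFactorial (b : ℝ) j /
    (risingFactorial ((a : ℝ) + (b : ℝ) + 1) j * (j.factorial : ℝ)) * z ^ j

lemma hterm_nonneg (a b : ℕ) {z : ℝ} (hz0 : 0 ≤ z) (j : ℕ) : 0 ≤ hterm a b z j := by
  unfold hterm
  have h1 := rf_nonneg (a := (a:ℝ)) (by positivity) j
  have h2 := rf_nonneg (a := (b:ℝ)) (by positivity) j
  have h3 := rf_pos (a := (a:ℝ)+(b:ℝ)+1) (by positivity) j
  have h4 : (0:ℝ) < (j.factorial : ℝ) := by positivity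
  have h5 : (0:ℝ) ≤ z ^ j := pow_nonneg hz0 j
  positivity

lemma hterm_summable (a b : ℕ) {z : ℝ} (hz0 : 0 ≤ z) (hz1 : z < 1) :
    Summable (hterm a b z) := by
  refine Summable.of_nonneg_of_le (hterm_nonneg a b hz0) (fun j => ?_)
    (summable_poly_geom hz0 hz1 a)
  unfold hterm
  have h3 : (0:ℝ) < risingFactorial ((a:ℝ)+(b:ℝ)+1) j := rf_pos (by positivity) j
  have h4 : (0:ℝ) < (j.factorial : ℝ) := by positivity
  have h5 : (0:ℝ) ≤ z ^ j := pow_nonneg hz0 j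
  have hmono : risingFactorial (b : ℝ) j ≤ risingFactorial ((a:ℝ)+(b:ℝ)+1) j :=
    rf_mono (by positivity) (by linarith [Nat.cast_nonneg (α := ℝ) a]) j
  have h1 := rf_nonneg (a := (a:ℝ)) (by positivity) j
  have step1 : risingFactorial (a : ℝ) j * risingFactorial (b : ℝ) j /
      (risingFactorial ((a : ℝ) + (b : ℝ) + 1) j * (j.factorial : ℝ)) ≤
      risingFactorial (a : ℝ) j / (j.factorial : ℝ) := by
    rw [div_le_div_iff₀ (by positivity) (by positivity)]
    calc risingFactorial (a:ℝ) j * risingFactorial (b:ℝ) j * (j.factorial:ℝ)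
        ≤ risingFactorial (a:ℝ) j * risingFactorial ((a:ℝ)+(b:ℝ)+1) j * (j.factorial:ℝ) := by
          apply mul_le_mul_of_nonneg_right _ (le_of_lt h4)
          exact mul_le_mul_of_nonneg_left hmono h1
      _ = risingFactorial (a:ℝ) j * (risingFactorial ((a:ℝ)+(b:ℝ)+1) j * (j.factorial:ℝ)) := by
          ring
  have step2 : risingFactorial (a : ℝ) j / (j.factorial : ℝ) ≤ ((j : ℝ) + 1) ^ a := by
    rw [div_le_iff₀ h4]
    exact rf_le_pow a j
  calc risingFactorial (a : ℝ) j * risingFactorial (b : ℝ) j /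
      (risingFactorial ((a : ℝ) + (b : ℝ) + 1) j * (j.factorial : ℝ)) * z ^ j
      ≤ risingFactorial (a : ℝ) j / (j.factorial : ℝ) * z ^ j :=
        mul_le_mul_of_nonneg_right step1 h5
    _ ≤ ((j : ℝ) + 1) ^ a * z ^ j := mul_le_mul_of_nonneg_right step2 h5

lemma C_eq_tsum (a b : ℕ) (z : ℝ) :
    C a b z = ∑' j : ℕ,
      ((a.factorial : ℝ) * (b.factorial : ℝ) / ((a+b).factorial : ℝ)) * hterm a b z j := by
  unfold C F hterm
  rw [tsum_mul_left]

/-- Closed form of the `(g,j)` term of the double series. -/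
noncomputable def Wt (z : ℝ) (M N g j : ℕ) : ℝ :=
  z ^ (g + j + 1) * (((N + g + j).factorial : ℝ) *
    ((M.factorial : ℝ) * risingFactorial (M : ℝ) j)) /
    (((M + N + g + j + 1).factorial : ℝ) * (j.factorial : ℝ))

lemma Wt_nonneg {z : ℝ} (hz0 : 0 ≤ z) (M N g j : ℕ) : 0 ≤ Wt z M N g j := by
  unfold Wt
  have h1 := rf_nonneg (a := (M:ℝ)) (by positivity) j
  positivity

lemma term_eq_Wt {z : ℝ} (M N g j : ℕ) :
    z ^ (g+1) / ((N+g+1 : ℕ) : ℝ) *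
      (((M.factorial : ℝ) * (((N+g+1).factorial : ℝ)) / (((M+(N+g+1)).factorial : ℝ))) *
        hterm M (N+g+1) z j)
    = Wt z M N g j := by
  unfold hterm Wt
  have e1 : ((N+g).factorial : ℝ) * risingFactorial (((N+g : ℕ) : ℝ)+1) j
      = (((N+g)+j).factorial : ℝ) := fact_mul_rf_s6 _ _
  have e2 : ((M+N+g+1).factorial : ℝ) * risingFactorial (((M+N+g+1 : ℕ) : ℝ)+1) j
      = (((M+N+g+1)+j).factorial : ℝ) := fact_mul_rf_s6 _ _
  have c1 : (((N+g+1 : ℕ)) : ℝ) = ((N+g : ℕ) : ℝ) + 1 := by push_cast; ring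
  have c2 : ((M : ℝ) + ((N+g+1 : ℕ) : ℝ) + 1) = (((M+N+g+1 : ℕ)) : ℝ) + 1 := by
    push_cast; ring
  have c3 : M + (N+g+1) = M+N+g+1 := by omega
  have c4 : (N+g)+j = N+g+j := by omega
  have c5 : (M+N+g+1)+j = M+N+g+j+1 := by omega
  rw [c1, c2, c3] at *
  rw [c4] at e1; rw [c5] at e2
  -- factorial of N+g+1 in terms of N+g
  have f1 : ((N+g+1).factorial : ℝ) = (((N+g : ℕ) : ℝ) + 1) * ((N+g).factorial : ℝ) := by
    rw [show N+g+1 = (N+g)+1 from rfl, Nat.factorial_succ]; push_cast; ring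
  have hB : risingFactorial (((N+g : ℕ) : ℝ)+1) j = ((N+g+j).factorial : ℝ) / ((N+g).factorial : ℝ) := by
    rw [eq_div_iff (by positivity), mul_comm]; exact e1
  have hD : risingFactorial (((M+N+g+1 : ℕ) : ℝ)+1) j
      = ((M+N+g+j+1).factorial : ℝ) / ((M+N+g+1).factorial : ℝ) := by
    rw [eq_div_iff (by positivity), mul_comm]; exact e2
  rw [hB, hD, f1]
  have hz1 : z ^ (g+j+1) = z ^ (g+1) * z ^ j := by rw [← pow_add]; ring_nf
  rw [hz1]
  have n1 : (((N+g:ℕ):ℝ) + 1) ≠ 0 := by positivity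
  have n2 : ((N+g).factorial : ℝ) ≠ 0 := by positivity
  have n3 : ((M+N+g+1).factorial : ℝ) ≠ 0 := by positivity
  have n4 : ((M+N+g+j+1).factorial : ℝ) ≠ 0 := by positivity
  have n5 : ((j.factorial) : ℝ) ≠ 0 := by positivity
  have n6 : ((N+g+j).factorial : ℝ) ≠ 0 := by positivity
  field_simp

/-- Hockey-stick identity: ∑_{j≤p} M!·(M)_j/j! = (M+p)!/p!. -/
lemma hockey (M p : ℕ) :
    ∑ j ∈ Finset.range (p+1),
      (M.factorial : ℝ) * risingFactorial (M : ℝ) j / (j.factorial : ℝ)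
    = ((M+p).factorial : ℝ) / (p.factorial : ℝ) := by
  induction p with
  | zero => simp [rf_zero]
  | succ p ih =>
      rw [Finset.sum_range_succ, ih]
      have key : (M.factorial : ℝ) * risingFactorial (M : ℝ) (p+1)
          = (M : ℝ) * ((M+p).factorial : ℝ) := by
        rw [rf_succ']
        have := fact_mul_rf_s6 M p
        calc (M.factorial : ℝ) * ((M : ℝ) * risingFactorial ((M:ℝ)+1) p)
            = (M : ℝ) * ((M.factorial : ℝ) * risingFactorial ((M:ℝ)+1) p) := by ring
          _ = (M : ℝ) * ((M+p).factorial : ℝ) := by rw [this]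
      rw [key]
      have f1 : (((p+1).factorial) : ℝ) = ((p:ℝ)+1) * (p.factorial : ℝ) := by
        rw [Nat.factorial_succ]; push_cast; ring
      have f2 : (((M+(p+1)).factorial) : ℝ) = ((M:ℝ)+(p:ℝ)+1) * ((M+p).factorial : ℝ) := by
        rw [show M+(p+1) = (M+p)+1 from by omega, Nat.factorial_succ]; push_cast; ring
      rw [f1, f2]
      have n1 : ((p.factorial : ℝ)) ≠ 0 := by positivity
      have n2 : ((p:ℝ)+1) ≠ 0 := by positivity
      field_simp
      ring

/-- Diagonal summand of `SS`. -/
noncomputable def SSt (z : ℝ) (M N p : ℕ) : ℝ :=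
  z ^ (p+1) * (((M+p).factorial : ℝ) * ((N+p).factorial : ℝ)) /
    (((M+N+p+1).factorial : ℝ) * (p.factorial : ℝ))

noncomputable def SS (z : ℝ) (M N : ℕ) : ℝ≥0∞ := ∑' p : ℕ, ENNReal.ofReal (SSt z M N p)

lemma SS_symm (z : ℝ) (M N : ℕ) : SS z M N = SS z N M := by
  unfold SS SSt
  apply tsum_congr
  intro p
  rw [show M+N+p+1 = N+M+p+1 from by omega,
    mul_comm (((M+p).factorial : ℝ)) (((N+p).factorial : ℝ))]

/-- The sigma-diagonal equivalence (p, j ≤ p) ≃ ℕ × ℕ, (p,j) ↦ (p-j, j). -/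
def diagEquiv : (Σ p : ℕ, Fin (p+1)) ≃ ℕ × ℕ where
  toFun x := (x.1 - x.2.val, x.2.val)
  invFun y := ⟨y.1 + y.2, ⟨y.2, by omega⟩⟩
  left_inv := by
    rintro ⟨p, j⟩
    dsimp only
    have hj : j.val ≤ p := by omega
    have h : p - j.val + j.val = p := by omega
    refine Sigma.ext (by simpa using h) ?_
    exact (Fin.heq_ext_iff (by dsimp only; omega)).mpr rfl
  right_inv := by
    rintro ⟨a, b⟩
    simp

/-- The core identity: the y₀-tail sum over the first index equals the symmetric series. -/
lemma core {z : ℝ} (hz0 : 0 ≤ z) (hz1 : z < 1) (M N : ℕ) :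
    ∑' g : ℕ, ENNReal.ofReal (z ^ (g+1) / ((N+g+1 : ℕ) : ℝ) * C M (N+g+1) z)
    = SS z M N := by
  -- step 1: expand each term as a tsum over j of Wt
  have step1 : ∀ g : ℕ,
      ENNReal.ofReal (z ^ (g+1) / ((N+g+1 : ℕ) : ℝ) * C M (N+g+1) z)
      = ∑' j : ℕ, ENNReal.ofReal (Wt z M N g j) := by
    intro g
    rw [C_eq_tsum, ← tsum_mul_left]
    have hc : (0:ℝ) ≤ z ^ (g+1) / ((N+g+1 : ℕ) : ℝ) := by positivity
    have hsum : Summable (fun j => z ^ (g+1) / ((N+g+1 : ℕ) : ℝ) *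
        (((M.factorial : ℝ) * (((N+g+1).factorial : ℝ)) / (((M+(N+g+1)).factorial : ℝ))) *
          hterm M (N+g+1) z j)) :=
      (((hterm_summable M (N+g+1) hz0 hz1).mul_left _).mul_left _)
    rw [ENNReal.ofReal_tsum_of_nonneg _ hsum]
    · exact tsum_congr fun j => by rw [term_eq_Wt]
    · intro j
      have := hterm_nonneg M (N+g+1) hz0 j
      have h1 : (0:ℝ) ≤ ((M.factorial : ℝ) * (((N+g+1).factorial : ℝ)) /
          (((M+(N+g+1)).factorial : ℝ))) := by positivity
      positivity
  simp only [step1]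
  -- step 2: double tsum to product tsum, then diagonal reindexing
  rw [← ENNReal.tsum_prod' (f := fun x : ℕ × ℕ => ENNReal.ofReal (Wt z M N x.1 x.2)),
    ← Equiv.tsum_eq diagEquiv, ENNReal.tsum_sigma']
  unfold SS
  apply tsum_congr
  intro p
  rw [tsum_fintype]
  -- step 3: the finite diagonal sum evaluates via hockey stick
  have hW : ∀ j : Fin (p+1),
      Wt z M N (p - j.val) j.val
      = (z ^ (p+1) * ((N+p).factorial : ℝ) / (((M+N+p+1).factorial : ℝ)))
        * ((M.factorial : ℝ) * risingFactorial (M : ℝ) j.val / (j.val.factorial : ℝ)) := by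
    intro j
    have hj : j.val ≤ p := by omega
    unfold Wt
    rw [show p - j.val + j.val + 1 = p + 1 from by omega,
      show N + (p - j.val) + j.val = N + p from by omega,
      show M + N + (p - j.val) + j.val + 1 = M + N + p + 1 from by omega]
    field_simp
  calc ∑ j : Fin (p+1), ENNReal.ofReal (Wt z M N (diagEquiv ⟨p, j⟩).1 (diagEquiv ⟨p, j⟩).2)
      = ENNReal.ofReal (∑ j : Fin (p+1), Wt z M N (p - j.val) j.val) := by
        rw [ENNReal.ofReal_sum_of_nonneg (fun j _ => Wt_nonneg hz0 _ _ _ _)]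
        rfl
    _ = ENNReal.ofReal (SSt z M N p) := by
        congr 1
        rw [Fin.sum_univ_eq_sum_range (fun j => Wt z M N (p - j) j)]
        have hW' : ∀ j ∈ Finset.range (p+1), Wt z M N (p-j) j
            = (z ^ (p+1) * ((N+p).factorial : ℝ) / ((M+N+p+1).factorial : ℝ))
              * ((M.factorial : ℝ) * risingFactorial (M:ℝ) j / (j.factorial : ℝ)) := by
          intro j hj
          have hjp : j ≤ p := by simp at hj; omega
          unfold Wt
          rw [show p - j + j + 1 = p + 1 from by omega,
            show N + (p - j) + j = N + p from by omega,
            show M + N + (p - j) + j + 1 = M + N + p + 1 from by omega]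
          have n1 : ((M+N+p+1).factorial : ℝ) ≠ 0 := by positivity
          have n2 : ((j.factorial) : ℝ) ≠ 0 := by positivity
          field_simp
        rw [Finset.sum_congr rfl hW', ← Finset.mul_sum, hockey]
        unfold SSt
        have n1 : ((M+N+p+1).factorial : ℝ) ≠ 0 := by positivity
        have n2 : ((p.factorial) : ℝ) ≠ 0 := by positivity
        field_simp

-- ### auxiliary lemmas

lemma termFactor_nonneg {z : ℝ} (hz0 : 0 ≤ z) (hz1 : z < 1) (k : ℕ) (μ : Bool)
    (a b : ℕ) : 0 ≤ termFactor z k μ a b := by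
  unfold termFactor
  cases μ with
  | false =>
      simp only [Bool.false_eq_true, if_neg, ite_false]
      positivity
  | true =>
      simp only [ite_true]
      apply div_nonneg _ (by positivity)
      have := pow_le_one₀ hz0 (le_of_lt hz1) (n := b - a)
      linarith
lemma C_symm (m n : ℕ) (z : ℝ) : C m n z = C n m z := by
  unfold C F
  rw [show ((m+n).factorial) = ((n+m).factorial) from by rw [Nat.add_comm]]
  have h1 : ((m.factorial : ℝ) * n.factorial : ℝ) = ((n.factorial : ℝ) * m.factorial : ℝ) := by
    ring
  rw [h1]
  congr 1
  apply tsum_congr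
  intro j
  rw [show ((n:ℝ)+(m:ℝ)+1) = ((m:ℝ)+(n:ℝ)+1) from by ring]
  ring

lemma chain_snoc_of_le {n : ℕ} (e : Fin n → ℕ) (g : ℕ) {i : ℕ} (h : i ≤ n) :
    chain (Fin.snoc e g) i = chain e i := by
  rw [chain, chain, Finset.sum_filter, Finset.sum_filter, Fin.sum_univ_castSucc]
  have hn : ¬ ((n : ℕ) < i) := by omega
  simp [Fin.snoc_castSucc, Fin.coe_castSucc, Fin.val_last, hn]

lemma chain_snoc_top {n : ℕ} (e : Fin n → ℕ) (g : ℕ) :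
    chain (Fin.snoc e g) (n+1) = chain e n + (g+1) := by
  rw [chain, chain, Finset.sum_filter, Finset.sum_filter, Fin.sum_univ_castSucc]
  have h1 : ∀ j : Fin n, ((j : ℕ) < n + 1) := fun j => by omega
  have h2 : ∀ j : Fin n, ((j : ℕ) < n) := fun j => j.isLt
  simp [Fin.snoc_castSucc, Fin.coe_castSucc, Fin.val_last, h1, h2]

def snocEquiv (n : ℕ) : ((Fin n → ℕ) × ℕ) ≃ (Fin (n+1) → ℕ) where
  toFun p := Fin.snoc p.1 p.2
  invFun f := (fun i => f i.castSucc, f (Fin.last n))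
  left_inv p := by
    ext i
    · simp
    · simp
  right_inv f := by
    funext i
    refine Fin.lastCases ?_ (fun j => ?_) i
    · simp
    · simp

@[simp] lemma snocEquiv_apply (n : ℕ) (p : (Fin n → ℕ) × ℕ) :
    snocEquiv n p = Fin.snoc p.1 p.2 := rfl

lemma get_eq_getD (l : AugIndex) (i : Fin l.length) : l.get i = l.getD ↑i (0, false) :=
  by simp [List.getD_eq_getElem?_getD]

noncomputable def prodTF (z : ℝ) (A : AugIndex) {r : ℕ} (d : Fin r → ℕ) : ℝ :=
  ∏ i : Fin r, termFactor z ((A.getD ↑i (0,false)).1) ((A.getD ↑i (0,false)).2)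
    (chain d ↑i) (chain d (↑i + 1))

lemma prodTF_nonneg {z : ℝ} (hz0 : 0 ≤ z) (hz1 : z < 1) (A : AugIndex) {r : ℕ}
    (d : Fin r → ℕ) : 0 ≤ prodTF z A d :=
  Finset.prod_nonneg fun i _ => termFactor_nonneg hz0 hz1 _ _ _ _

lemma connSum_snoc {z : ℝ} (hz0 : 0 ≤ z) (hz1 : z < 1) (K L : AugIndex) :
    connSum K (L ++ [(1, false)]) z
    = ∑' q : (Fin K.length → ℕ) × (Fin L.length → ℕ),
        ENNReal.ofReal (prodTF z K q.1 * prodTF z L q.2) *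
          SS z (chain q.1 K.length) (chain q.2 L.length) := by
  rw [connSum]
  simp only [get_eq_getD]
  have hlen : (L ++ [((1:ℕ), false)]).length = L.length + 1 := by simp
  rw [hlen]
  rw [← Equiv.tsum_eq (Equiv.prodCongr (Equiv.refl (Fin K.length → ℕ)) (snocEquiv L.length))]
  rw [ENNReal.tsum_prod', ENNReal.tsum_prod']
  apply tsum_congr
  intro d
  rw [ENNReal.tsum_prod']
  apply tsum_congr
  intro e
  simp only [Equiv.prodCongr_apply, Equiv.coe_refl, Prod.map_apply, id_eq, snocEquiv_apply]
  -- now: ∑' g, (term with Fin.snoc e g) = ofReal (prodTF z K d * prodTF z L e) * SS z _ _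
  set M := chain d K.length with hM
  set Nv := chain e L.length with hNv
  have hsplit : ∀ g : ℕ,
      (∏ x : Fin (L.length + 1),
        termFactor z ((L ++ [((1:ℕ),false)]).getD ↑x (0,false)).1
          ((L ++ [((1:ℕ),false)]).getD ↑x (0,false)).2
          (chain (Fin.snoc e g) ↑x) (chain (Fin.snoc e g) (↑x + 1)))
      = prodTF z L e * (z ^ (g+1) / ((Nv + g + 1 : ℕ) : ℝ)) := by
    intro g
    rw [Fin.prod_univ_castSucc]
    congr 1
    · apply Finset.prod_congr rfl
      intro j _
      have hj : (j : ℕ) < L.length := j.isLt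
      simp only [Fin.coe_castSucc]
      rw [List.getD_append _ _ _ _ hj]
      rw [chain_snoc_of_le e g (le_of_lt hj),
        chain_snoc_of_le e g (by omega : (j:ℕ)+1 ≤ L.length)]
    · simp only [Fin.val_last]
      rw [List.getD_append_right _ _ _ _ (le_refl _), Nat.sub_self]
      rw [chain_snoc_of_le e g (le_refl _), chain_snoc_top e g]
      show termFactor z 1 false Nv (Nv + (g+1)) = _
      unfold termFactor
      rw [show Nv + (g+1) - Nv = g + 1 from by omega]
      rw [show (Nv + (g+1) : ℕ) = (Nv + g + 1 : ℕ) from by omega]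
      rw [pow_one]
      simp
  have hgoal : ∀ g : ℕ,
      chain (Fin.snoc e g : Fin (L.length+1) → ℕ) (L.length + 1) = Nv + g + 1 := by
    intro g
    rw [chain_snoc_top e g]; omega
  have hPKL : (0:ℝ) ≤ prodTF z K d * prodTF z L e :=
    mul_nonneg (prodTF_nonneg hz0 hz1 K d) (prodTF_nonneg hz0 hz1 L e)
  simp only [hsplit, hgoal]
  calc ∑' g : ℕ, ENNReal.ofReal (prodTF z K d *
          (prodTF z L e * (z ^ (g+1) / ((Nv + g + 1 : ℕ) : ℝ))) * C M (Nv + g + 1) z)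
      = ∑' g : ℕ, ENNReal.ofReal (prodTF z K d * prodTF z L e) *
          ENNReal.ofReal (z ^ (g+1) / ((Nv + g + 1 : ℕ) : ℝ) * C M (Nv + g + 1) z) := by
        apply tsum_congr
        intro g
        rw [← ENNReal.ofReal_mul hPKL]
        congr 1
        ring
    _ = ENNReal.ofReal (prodTF z K d * prodTF z L e) *
          ∑' g : ℕ, ENNReal.ofReal (z ^ (g+1) / ((Nv + g + 1 : ℕ) : ℝ) * C M (Nv + g + 1) z) :=
        ENNReal.tsum_mul_left
    _ = ENNReal.ofReal (prodTF z K d * prodTF z L e) * SS z M Nv := by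
        rw [core hz0 hz1 M Nv]

lemma connSum_comm (K L : AugIndex) (z : ℝ) : connSum K L z = connSum L K z := by
  rw [connSum, connSum]
  rw [← Equiv.tsum_eq (Equiv.prodComm (Fin K.length → ℕ) (Fin L.length → ℕ))]
  apply tsum_congr
  intro p
  simp only [Equiv.prodComm_apply, Prod.snd_swap, Prod.fst_swap]
  congr 1
  rw [C_symm]
  ring

/-- Transport relation: L̃i(w(k̃)y₀; w(l̃); z) = L̃i(w(k̃); w(l̃)y₀; z), i.e. appending the
augmented entry (1,0) to the first index equals appending it to the second index. -/
theorem transport_y0 (z : ℝ) (hz0 : 0 ≤ z) (hz1 : z < 1) (K L : AugIndex)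
    (hK : K.Valid) (hL : L.Valid) :
    connSum (K ++ [(1, false)]) L z = connSum K (L ++ [(1, false)]) z := by
  rw [connSum_comm (K ++ [(1, false)]) L z]
  rw [connSum_snoc hz0 hz1 L K, connSum_snoc hz0 hz1 K L]
  rw [← Equiv.tsum_eq (Equiv.prodComm (Fin K.length → ℕ) (Fin L.length → ℕ))]
  apply tsum_congr
  intro p
  simp only [Equiv.prodComm_apply, Prod.snd_swap, Prod.fst_swap]
  rw [SS_symm, mul_comm (prodTF z L p.2) (prodTF z K p.1)]
end

section
/- Let 0 < q < 1, let α, β, γ be complex numbers with 1 − q^k γ ≠ 0 for all integers k ≥ 0, and let z be complex with |z| < 1. Then the q-hypergeometric series satisfies the contiguous relation φ_q(α,β;γ;qz) = φ_q(α,qβ;γ;z) − z·((1−α)/(1−γ))·φ_q(qα,qβ;qγ;z). -/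
/-- The q-shifted factorial (a;q)_n = (1−a)(1−qa)⋯(1−q^{n−1}a). -/
noncomputable def qPoch (q a : ℂ) (n : ℕ) : ℂ := ∏ i ∈ Finset.range n, (1 - q ^ i * a)

/-- The q-hypergeometric series φ_q(α,β;γ;z) = ∑_{n≥0} (α;q)_n (β;q)_n / ((γ;q)_n (q;q)_n) · zⁿ. -/
noncomputable def qHyp (q α β γ z : ℂ) : ℂ :=
  ∑' n : ℕ, qPoch q α n * qPoch q β n / (qPoch q γ n * qPoch q q n) * z ^ n

lemma qPoch_zero (q a : ℂ) : qPoch q a 0 = 1 := by simp [qPoch]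

lemma qPoch_succ (q a : ℂ) (n : ℕ) :
    qPoch q a (n + 1) = qPoch q a n * (1 - q ^ n * a) := Finset.prod_range_succ _ _

lemma qPoch_succ_left (q a : ℂ) (n : ℕ) :
    qPoch q a (n + 1) = (1 - a) * qPoch q (q * a) n := by
  rw [qPoch, Finset.prod_range_succ', qPoch]
  have h : ∀ i : ℕ, (1 - q ^ (i + 1) * a) = 1 - q ^ i * (q * a) := fun i => by ring
  simp only [h, pow_zero, one_mul]
  ring

lemma qPoch_ne_zero (q a : ℂ) (n : ℕ) (h : ∀ i, (1 : ℂ) - q ^ i * a ≠ 0) :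
    qPoch q a n ≠ 0 := by
  rw [qPoch, Finset.prod_ne_zero_iff]
  intro i _; exact h i

lemma qq_factor_ne (q : ℝ) (hq0 : 0 < q) (hq1 : q < 1) (i : ℕ) :
    (1 : ℂ) - (q : ℂ) ^ i * q ≠ 0 := by
  have h1 : q ^ i * q ≤ q := by
    nlinarith [pow_le_one₀ hq0.le hq1.le (n := i), pow_nonneg hq0.le i]
  have : (1 : ℂ) - (q : ℂ) ^ i * q = ((1 - q ^ i * q : ℝ) : ℂ) := by push_cast; ring
  rw [this]
  exact_mod_cast ne_of_gt (by linarith : (0:ℝ) < 1 - q ^ i * q)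

lemma qHyp_summable (q : ℝ) (hq0 : 0 < q) (hq1 : q < 1) (α β γ : ℂ)
    (hγ : ∀ k : ℕ, (1 : ℂ) - (q : ℂ) ^ k * γ ≠ 0) (z : ℂ) (hz : ‖z‖ < 1) :
    Summable (fun n => qPoch q α n * qPoch q β n / (qPoch q γ n * qPoch q q n) * z ^ n) := by
  set f : ℕ → ℂ := fun n => qPoch q α n * qPoch q β n / (qPoch q γ n * qPoch q q n) * z ^ n
  set r : ℝ := (1 + ‖z‖) / 2 with hr
  have hr1 : r < 1 := by simp only [hr]; linarith
  have hzr : ‖z‖ < r := by simp only [hr]; linarith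
  have hG : ∀ n, qPoch q γ n ≠ 0 := fun n => qPoch_ne_zero _ _ _ hγ
  have hQ : ∀ n, qPoch q q n ≠ 0 := fun n => qPoch_ne_zero _ _ _ (qq_factor_ne q hq0 hq1)
  set ρ : ℕ → ℂ := fun n =>
    (1 - (q:ℂ) ^ n * α) * (1 - (q:ℂ) ^ n * β) * z / ((1 - (q:ℂ) ^ n * γ) * (1 - (q:ℂ) ^ n * q))
  have hstep : ∀ n, f (n + 1) = f n * ρ n := by
    intro n
    simp only [f, ρ, qPoch_succ, pow_succ]
    field_simp
  have hpow : Filter.Tendsto (fun n => (q:ℂ) ^ n) Filter.atTop (nhds 0) := by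
    apply tendsto_pow_atTop_nhds_zero_of_norm_lt_one
    rw [Complex.norm_of_nonneg hq0.le]
    exact hq1
  have hfac : ∀ a : ℂ, Filter.Tendsto (fun n => 1 - (q:ℂ) ^ n * a) Filter.atTop (nhds 1) := by
    intro a
    have := tendsto_const_nhds (x := (1:ℂ)) (f := Filter.atTop (α := ℕ)) |>.sub
      (hpow.mul_const a)
    simpa using this
  have hρ : Filter.Tendsto ρ Filter.atTop (nhds z) := by
    have h1 := (((hfac α).mul (hfac β)).mul_const z).div (((hfac γ).mul (hfac q))) (by simp)
    have h2 : ((1:ℂ) * 1 * z / (1 * 1)) = z := by simp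
    rw [h2] at h1
    exact h1
  have hρnorm : Filter.Tendsto (fun n => ‖ρ n‖) Filter.atTop (nhds ‖z‖) :=
    hρ.norm
  have hev : ∀ᶠ n in Filter.atTop, ‖f (n + 1)‖ ≤ r * ‖f n‖ := by
    filter_upwards [hρnorm.eventually_le_const hzr] with n hn
    rw [hstep n, norm_mul, mul_comm]
    exact mul_le_mul_of_nonneg_right hn (norm_nonneg _)
  exact summable_of_ratio_norm_eventually_le hr1 hev

/-- Contiguous relation: φ_q(α,β;γ;qz) = φ_q(α,qβ;γ;z) − z·((1−α)/(1−γ))·φ_q(qα,qβ;qγ;z). -/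
theorem qHyp_contiguous_three (q : ℝ) (hq0 : 0 < q) (hq1 : q < 1) (α β γ z : ℂ)
    (hγ : ∀ k : ℕ, (1 : ℂ) - (q : ℂ) ^ k * γ ≠ 0) (hz : ‖z‖ < 1) :
    qHyp q α β γ (q * z)
      = qHyp q α (q * β) γ z
        - z * ((1 - α) / (1 - γ)) * qHyp q (q * α) (q * β) (q * γ) z := by
  have hγ0 : (1 : ℂ) - γ ≠ 0 := by simpa using hγ 0
  have hγ' : ∀ k : ℕ, (1 : ℂ) - (q : ℂ) ^ k * ((q : ℂ) * γ) ≠ 0 := by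
    intro k
    have h := hγ (k + 1)
    rw [pow_succ] at h
    simpa [mul_assoc] using h
  have hqz : ‖(q : ℂ) * z‖ < 1 := by
    rw [norm_mul, Complex.norm_of_nonneg hq0.le]
    nlinarith [norm_nonneg z]
  set A : ℕ → ℂ := fun n =>
    qPoch q α n * qPoch q β n / (qPoch q γ n * qPoch q q n) * ((q : ℂ) * z) ^ n with hAdef
  set B : ℕ → ℂ := fun n =>
    qPoch q α n * qPoch q ((q : ℂ) * β) n / (qPoch q γ n * qPoch q q n) * z ^ n with hBdef
  set C : ℕ → ℂ := fun n =>
    qPoch q ((q : ℂ) * α) n * qPoch q ((q : ℂ) * β) n /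
      (qPoch q ((q : ℂ) * γ) n * qPoch q q n) * z ^ n with hCdef
  have ha : Summable A := qHyp_summable q hq0 hq1 α β γ hγ _ hqz
  have hb : Summable B := qHyp_summable q hq0 hq1 α _ γ hγ z hz
  have hc : Summable C := qHyp_summable q hq0 hq1 _ _ _ hγ' z hz
  have hG' : ∀ n, qPoch q ((q : ℂ) * γ) n ≠ 0 := fun n => qPoch_ne_zero _ _ _ hγ'
  have hQ : ∀ n, qPoch q q n ≠ 0 := fun n => qPoch_ne_zero _ _ _ (qq_factor_ne q hq0 hq1)
  have key : ∀ n : ℕ, B (n + 1) - A (n + 1) = z * ((1 - α) / (1 - γ)) * C n := by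
    intro n
    simp only [hAdef, hBdef, hCdef,
      qPoch_succ_left q α n, qPoch_succ_left q β n, qPoch_succ_left q γ n,
      qPoch_succ q ((q : ℂ) * β) n, qPoch_succ q (q : ℂ) n]
    have hq' : (1 : ℂ) - (q : ℂ) ^ n * q ≠ 0 := qq_factor_ne q hq0 hq1 n
    have hGn := hG' n
    have hQn := hQ n
    have hq'' : (1 : ℂ) - (q : ℂ) * (q : ℂ) ^ n ≠ 0 := by rw [mul_comm]; exact hq'
    field_simp
    ring
  have hsub : (∑' n, B n) - (∑' n, A n) = z * ((1 - α) / (1 - γ)) * ∑' n, C n := by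
    rw [← Summable.tsum_sub hb ha, Summable.tsum_eq_zero_add (hb.sub ha)]
    simp only [key]
    have h0 : B 0 - A 0 = 0 := by simp [hAdef, hBdef, qPoch_zero]
    rw [h0, zero_add, tsum_mul_left]
  show (∑' n, A n) = (∑' n, B n) - z * ((1 - α) / (1 - γ)) * ∑' n, C n
  linear_combination -hsub
end
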